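/- Let M be an n×n complex matrix (n ≥ 1), b a block assignment, M_D the pinching of M with respect to b, and M_off = M − M_D. Assume M_D is invertible, det(M) and det(M_D) are real, and every eigenvalue of A = M_D⁻¹ M_off is real and strictly greater than −1. Let ρ = ρ(A) be the spectral radius of A and λ_min the smallest eigenvalue of A. Then 0 ≤ (det(M_D) − det(M))/det(M_D) ≤ 1 − exp(−n ρ²/(1 + λ_min)). -/

import Mathlib

open Matrix

/-- The pinching (block diagonal part) of a matrix `M` with respect to a
block assignment `b`. -/
def pinch {n k : ℕ} (b : Fin n → Fin k) (M : Matrix (Fin n) (Fin n) ℂ) :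
    Matrix (Fin n) (Fin n) ℂ :=
  fun i j => if b i = b j then M i j else 0


open Matrix Polynomial

-- per-element exponential inequality
lemma exp_key {a x : ℝ} (ha : -1 < a) (hax : a ≤ x) :
    Real.exp (x - x ^ 2 / (1 + a)) ≤ 1 + x := by
  have h1a : 0 < 1 + a := by linarith
  have h1x : 0 < 1 + x := by linarith
  have h1 : x - x ^ 2 / (1 + a) ≤ x / (1 + x) := by
    have hxx : x ^ 2 / (1 + x) ≤ x ^ 2 / (1 + a) :=
      div_le_div_of_nonneg_left (sq_nonneg x) h1a (by linarith)
    have : x / (1 + x) = x - x ^ 2 / (1 + x) := by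
      field_simp
      ring
    rw [this]
    linarith
  have h2 : Real.exp (x / (1 + x)) ≤ 1 + x := by
    set s := x / (1 + x) with hs
    have hs1 : 1 - s = 1 / (1 + x) := by
      rw [hs]
      field_simp
      ring
    have hpos : 0 < 1 - s := by rw [hs1]; positivity
    have := Real.add_one_le_exp (-s)
    have hinv : Real.exp s = (Real.exp (-s))⁻¹ := by
      rw [← Real.exp_neg, neg_neg]
    rw [hinv]
    have h3 : (Real.exp (-s))⁻¹ ≤ (1 - s)⁻¹ := by
      apply inv_anti₀ hpos
      linarith
    calc (Real.exp (-s))⁻¹ ≤ (1 - s)⁻¹ := h3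
      _ = 1 + x := by rw [hs1]; field_simp
  exact le_trans (Real.exp_le_exp.mpr h1) h2

lemma prod_le_exp_sum (s : Multiset ℝ) (h : ∀ x ∈ s, -1 < x) :
    (s.map (fun x => 1 + x)).prod ≤ Real.exp s.sum := by
  induction s using Multiset.induction with
  | empty => simp
  | cons y t ih =>
    have hy : -1 < y := h y (Multiset.mem_cons_self _ _)
    have ht : ∀ x ∈ t, -1 < x := fun x hx => h x (Multiset.mem_cons_of_mem hx)
    have hpt : 0 ≤ (t.map (fun x => 1 + x)).prod := by
      apply Multiset.prod_nonneg
      intro z hz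
      obtain ⟨x, hx, rfl⟩ := Multiset.mem_map.mp hz
      have := ht x hx; linarith
    simp only [Multiset.map_cons, Multiset.prod_cons, Multiset.sum_cons, Real.exp_add]
    apply mul_le_mul (by linarith [Real.add_one_le_exp y]) (ih ht) hpt (Real.exp_nonneg y)

lemma exp_le_prod {a : ℝ} (ha : -1 < a) (s : Multiset ℝ) (h : ∀ x ∈ s, a ≤ x) :
    Real.exp (s.sum - (s.map (fun x => x ^ 2)).sum / (1 + a)) ≤
      (s.map (fun x => 1 + x)).prod := by
  induction s using Multiset.induction with
  | empty => simp
  | cons y t ih =>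
    have hy : a ≤ y := h y (Multiset.mem_cons_self _ _)
    have ht : ∀ x ∈ t, a ≤ x := fun x hx => h x (Multiset.mem_cons_of_mem hx)
    simp only [Multiset.map_cons, Multiset.prod_cons, Multiset.sum_cons]
    have hsplit : y + t.sum - (y ^ 2 + (t.map (fun x => x ^ 2)).sum) / (1 + a)
        = (y - y ^ 2 / (1 + a)) + (t.sum - (t.map (fun x => x ^ 2)).sum / (1 + a)) := by
      have hne : (1 : ℝ) + a ≠ 0 := by linarith
      field_simp
      ring
    rw [hsplit, Real.exp_add]
    exact mul_le_mul (exp_key ha hy) (ih ht) (Real.exp_nonneg _)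
      (by have := exp_key ha hy; have := Real.exp_pos (y - y ^ 2 / (1 + a)); linarith)
def IsPinched {n k : ℕ} (b : Fin n → Fin k) (N : Matrix (Fin n) (Fin n) ℂ) : Prop :=
  ∀ i j, b i ≠ b j → N i j = 0

lemma isPinched_pinch {n k : ℕ} (b : Fin n → Fin k) (M : Matrix (Fin n) (Fin n) ℂ) :
    IsPinched b (pinch b M) := fun i j h => by simp [pinch, h]

lemma isPinched_one {n k : ℕ} (b : Fin n → Fin k) :
    IsPinched b (1 : Matrix (Fin n) (Fin n) ℂ) := fun i j h => by
  have : i ≠ j := fun hij => h (by rw [hij])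
  simp [Matrix.one_apply, this]

lemma IsPinched.mul {n k : ℕ} {b : Fin n → Fin k} {X Y : Matrix (Fin n) (Fin n) ℂ}
    (hX : IsPinched b X) (hY : IsPinched b Y) : IsPinched b (X * Y) := by
  intro i j h
  rw [Matrix.mul_apply]
  apply Finset.sum_eq_zero
  intro l _
  by_cases hl : b i = b l
  · rw [hY l j (by rw [← hl]; exact h), mul_zero]
  · rw [hX i l hl, zero_mul]

lemma IsPinched.pow {n k : ℕ} {b : Fin n → Fin k} {X : Matrix (Fin n) (Fin n) ℂ}
    (hX : IsPinched b X) (m : ℕ) : IsPinched b (X ^ m) := by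
  induction m with
  | zero => simpa [pow_zero] using isPinched_one b
  | succ m ih => rw [pow_succ]; exact ih.mul hX

lemma IsPinched.aeval {n k : ℕ} {b : Fin n → Fin k} {X : Matrix (Fin n) (Fin n) ℂ}
    (hX : IsPinched b X) (q : Polynomial ℂ) :
    IsPinched b (Polynomial.aeval X q) := by
  intro i j h
  rw [Polynomial.aeval_eq_sum_range]
  rw [Matrix.sum_apply]
  apply Finset.sum_eq_zero
  intro m _
  rw [Matrix.smul_apply, hX.pow m i j h, smul_zero]

lemma isPinched_inv {n k : ℕ} {b : Fin n → Fin k} {X : Matrix (Fin n) (Fin n) ℂ}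
    (hX : IsPinched b X) (hu : IsUnit X.det) : IsPinched b X⁻¹ := by
  set c := X.charpoly.coeff 0 with hc
  have hdet : X.det = (-1) ^ (Fintype.card (Fin n)) * c := X.det_eq_sign_charpoly_coeff
  have hcne : c ≠ 0 := by
    intro h0
    rw [h0, mul_zero] at hdet
    exact hu.ne_zero hdet
  have hkey : X * Polynomial.aeval X X.charpoly.divX = -(c • 1) := by
    have h0 : Polynomial.aeval X X.charpoly = 0 := X.aeval_self_charpoly
    have h1 : X.charpoly.divX * Polynomial.X + Polynomial.C c = X.charpoly :=
      X.charpoly.divX_mul_X_add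
    have h2 : Polynomial.aeval X (X.charpoly.divX * Polynomial.X + Polynomial.C c) = 0 := by
      rw [h1, h0]
    rw [map_add, _root_.map_mul, Polynomial.aeval_X, Polynomial.aeval_C] at h2
    have h3 : Polynomial.aeval X X.charpoly.divX * X = X * Polynomial.aeval X X.charpoly.divX := by
      have := _root_.map_mul (Polynomial.aeval X) X.charpoly.divX Polynomial.X
      rw [Polynomial.aeval_X] at this
      rw [← this, mul_comm X.charpoly.divX Polynomial.X, _root_.map_mul, Polynomial.aeval_X]
    rw [h3] at h2
    have : algebraMap ℂ (Matrix (Fin n) (Fin n) ℂ) c = c • 1 := by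
      rw [Algebra.algebraMap_eq_smul_one]
    rw [this] at h2
    linear_combination (norm := module) h2
  have hright : X * ((-c)⁻¹ • Polynomial.aeval X X.charpoly.divX) = 1 := by
    rw [Matrix.mul_smul, hkey, smul_neg, ← neg_smul, smul_smul]
    have : -(-c)⁻¹ * c = 1 := by
      field_simp
    rw [this, one_smul]
  have hinv : X⁻¹ = (-c)⁻¹ • Polynomial.aeval X X.charpoly.divX :=
    Matrix.inv_eq_right_inv hright
  rw [hinv]
  intro i j h
  rw [Matrix.smul_apply, (hX.aeval X.charpoly.divX) i j h, smul_zero]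
section DetOneAdd

variable {n k : ℕ}

-- det(1 + A) = ∏ (1 + μ) over roots of charpoly
lemma det_one_add (A : Matrix (Fin n) (Fin n) ℂ) :
    (1 + A).det = ((A.charpoly.roots).map (fun μ => 1 + μ)).prod := by
  have hsplits : A.charpoly.Splits := IsAlgClosed.splits A.charpoly
  have hcard : A.charpoly.roots.card = n := by
    rw [(Polynomial.splits_iff_card_roots).mp hsplits, Matrix.charpoly_natDegree_eq_dim,
      Fintype.card_fin]
  have hcp : A.charpoly =
      ((A.charpoly.roots).map (fun μ => Polynomial.X - Polynomial.C μ)).prod :=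
    hsplits.eq_prod_roots_of_monic A.charpoly_monic
  have heval1 : A.charpoly.eval (-1) = ((A.charpoly.roots).map (fun μ => -1 - μ)).prod := by
    conv_lhs => rw [hcp]
    rw [Polynomial.eval_multiset_prod, Multiset.map_map]
    congr 1
    apply Multiset.map_congr rfl
    intro μ _
    simp
  have heval2 : A.charpoly.eval (-1) = ((-1 : ℂ) ^ n) * (1 + A).det := by
    rw [Matrix.charpoly, _root_.eval_det, matPolyEquiv_charmatrix]
    rw [Polynomial.eval_sub, Polynomial.eval_X, Polynomial.eval_C]
    have hscal : Matrix.scalar (Fin n) (-1 : ℂ) - A = -(1 + A) := by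
      have h1 : Matrix.scalar (Fin n) (-1 : ℂ) = -(1 : Matrix (Fin n) (Fin n) ℂ) := by
        rw [show (-1 : ℂ) = -(1 : ℂ) by ring, map_neg, _root_.map_one]
      rw [h1]
      abel
    rw [hscal, Matrix.det_neg, Fintype.card_fin]
  have hprodneg : ((A.charpoly.roots).map (fun μ => -1 - μ)).prod
      = ((-1 : ℂ) ^ n) * ((A.charpoly.roots).map (fun μ => 1 + μ)).prod := by
    have : ((A.charpoly.roots).map (fun μ => -1 - μ))
        = (((A.charpoly.roots).map (fun μ => 1 + μ)).map Neg.neg) := by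
      rw [Multiset.map_map]
      apply Multiset.map_congr rfl
      intro μ _
      simp
      ring
    rw [this, Multiset.prod_map_neg, Multiset.card_map, hcard]
  have hne : ((-1 : ℂ) ^ n) ≠ 0 := by
    apply pow_ne_zero; norm_num
  apply mul_left_cancel₀ hne
  rw [← heval2, heval1, hprodneg]
end DetOneAdd

lemma re_multiset_sum (R : Multiset ℂ) : (R.map Complex.re).sum = R.sum.re := by
  induction R using Multiset.induction with
  | empty => simp
  | cons y t ih => simp [ih]

lemma ofReal_multiset_prod (t : Multiset ℝ) :
    (t.map Complex.ofReal).prod = ((t.prod : ℝ) : ℂ) := by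
  induction t using Multiset.induction with
  | empty => simp
  | cons y t ih => simp [ih]

theorem stmt0 {n k : ℕ} (hn : 1 ≤ n)
    (M : Matrix (Fin n) (Fin n) ℂ) (b : Fin n → Fin k)
    (MD Moff A : Matrix (Fin n) (Fin n) ℂ)
    (hMD : MD = pinch b M) (hMoff : Moff = M - MD) (hA : A = MD⁻¹ * Moff)
    (hMDinv : IsUnit MD.det)
    (hMreal : (M.det).im = 0) (hMDreal : (MD.det).im = 0)
    (heig : ∀ μ ∈ A.charpoly.roots, μ.im = 0 ∧ -1 < μ.re)
    (ρ : ℝ)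
    (hρub : ∀ μ ∈ A.charpoly.roots, ‖μ‖ ≤ ρ)
    (hρmax : ∃ μ ∈ A.charpoly.roots, ‖μ‖ = ρ)
    (lmin : ℝ)
    (hlb : ∀ μ ∈ A.charpoly.roots, lmin ≤ μ.re)
    (hlmin : ∃ μ ∈ A.charpoly.roots, μ.re = lmin) :
    0 ≤ (MD.det.re - M.det.re) / MD.det.re ∧
      (MD.det.re - M.det.re) / MD.det.re ≤
        1 - Real.exp (-((n : ℝ) * ρ ^ 2 / (1 + lmin))) := by
  classical
  set R := A.charpoly.roots with hR
  -- basic facts about roots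
  have hsplits : A.charpoly.Splits := IsAlgClosed.splits A.charpoly
  have hcard : Multiset.card R = n := by
    rw [hR, (Polynomial.splits_iff_card_roots).mp hsplits, Matrix.charpoly_natDegree_eq_dim,
      Fintype.card_fin]
  -- MD⁻¹ is pinched
  have hpMD : IsPinched b MD := by rw [hMD]; exact isPinched_pinch b M
  have hpInv : IsPinched b MD⁻¹ := isPinched_inv hpMD hMDinv
  -- trace A = 0
  have htr : A.trace = 0 := by
    rw [Matrix.trace]
    apply Finset.sum_eq_zero
    intro i _
    rw [Matrix.diag_apply, hA, Matrix.mul_apply]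
    apply Finset.sum_eq_zero
    intro j _
    by_cases hb : b i = b j
    · have : Moff j i = 0 := by
        rw [hMoff, hMD]
        simp [pinch, hb.symm]
      rw [this, mul_zero]
    · rw [hpInv i j hb, zero_mul]
  -- sum of roots = 0
  have hsumR : R.sum = 0 := by
    rw [hR, ← Matrix.trace_eq_sum_roots_charpoly, htr]
  -- factorization of det M
  have hMfac : M = MD * (1 + A) := by
    rw [hA, mul_add, mul_one, ← Matrix.mul_assoc, Matrix.mul_nonsing_inv MD hMDinv,
      Matrix.one_mul, hMoff]
    abel
  have hdetM : M.det = MD.det * (R.map (fun μ => 1 + μ)).prod := by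
    rw [hMfac, Matrix.det_mul, det_one_add, hR]
  -- real parts
  set s : Multiset ℝ := R.map Complex.re with hs
  have hscard : Multiset.card s = n := by rw [hs, Multiset.card_map, hcard]
  set P : ℝ := (s.map (fun x => 1 + x)).prod with hP
  have hprodC : (R.map (fun μ => 1 + μ)).prod = (P : ℂ) := by
    have h1 : R.map (fun μ => 1 + μ) = (s.map (fun x => 1 + x)).map Complex.ofReal := by
      rw [hs, Multiset.map_map, Multiset.map_map]
      apply Multiset.map_congr rfl
      intro μ hμ
      have him : μ.im = 0 := (heig μ hμ).1
      apply Complex.ext <;> simp [him]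
    rw [h1, ofReal_multiset_prod]
  -- MD.det and M.det real parts
  have hMre : M.det.re = MD.det.re * P := by
    rw [hdetM, hprodC, Complex.mul_re, hMDreal]
    simp
  have hdne : MD.det.re ≠ 0 := by
    intro h0
    apply hMDinv.ne_zero
    apply Complex.ext <;> simp [h0, hMDreal]
  -- properties of elements of s
  have hmem : ∀ x ∈ s, -1 < x ∧ lmin ≤ x ∧ x ^ 2 ≤ ρ ^ 2 := by
    intro x hx
    obtain ⟨μ, hμ, rfl⟩ := Multiset.mem_map.mp hx
    refine ⟨(heig μ hμ).2, hlb μ hμ, ?_⟩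
    have h1 : |μ.re| ≤ ρ := le_trans (Complex.abs_re_le_norm μ) (hρub μ hμ)
    have h2 := abs_le.mp h1
    exact sq_le_sq' h2.1 h2.2
  have hlmin1 : -1 < lmin := by
    obtain ⟨μ, hμ, hμe⟩ := hlmin
    rw [← hμe]
    exact (heig μ hμ).2
  have hssum : s.sum = 0 := by
    rw [hs, re_multiset_sum, hsumR, Complex.zero_re]
  -- upper bound P ≤ 1
  have hPle1 : P ≤ 1 := by
    have := prod_le_exp_sum s (fun x hx => (hmem x hx).1)
    rw [hssum, Real.exp_zero] at this
    exact this
  -- lower bound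
  have hsq : (s.map (fun x => x ^ 2)).sum ≤ (n : ℝ) * ρ ^ 2 := by
    have h1 : (s.map (fun x => x ^ 2)).sum ≤ Multiset.card (s.map (fun x => x ^ 2)) • (ρ ^ 2) := by
      apply Multiset.sum_le_card_nsmul
      intro x hx
      obtain ⟨y, hy, rfl⟩ := Multiset.mem_map.mp hx
      exact (hmem y hy).2.2
    rw [Multiset.card_map, hscard, nsmul_eq_mul] at h1
    exact h1
  have hPge : Real.exp (-((n : ℝ) * ρ ^ 2 / (1 + lmin))) ≤ P := by
    have h1 := exp_le_prod hlmin1 s (fun x hx => (hmem x hx).2.1)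
    rw [hssum] at h1
    refine le_trans (Real.exp_le_exp.mpr ?_) h1
    have h1l : (0 : ℝ) < 1 + lmin := by linarith
    have h2 : (s.map (fun x => x ^ 2)).sum / (1 + lmin) ≤ (n : ℝ) * ρ ^ 2 / (1 + lmin) := by
      gcongr
    rw [zero_sub]
    linarith
  -- final arithmetic
  have hkey : (MD.det.re - M.det.re) / MD.det.re = 1 - P := by
    rw [hMre]
    field_simp
  rw [hkey]
  constructor
  · linarith
  · linarith
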